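/- Let θ∈(0,1), θ₁∈(θ/2,1], T>0, and let v:[0,T]→ℝ be Hölder continuous with exponent θ₁. Let p≥2 be an integer which is either even, or arbitrary provided v is nonnegative. Then, at every t∈(0,T] at which the Riemann–Liouville derivatives ∂^θ v(t) and ∂^θ(v^p)(t) exist, one has ∂^θ(v^p)(t) ≤ ∂^θ(v^p)(t) + (p−1)·v(t)^p·ω_{1−θ}(t) ≤ p·v(t)^{p−1}·∂^θ v(t). -/

import Mathlib

open MeasureTheory Set intervalIntegral Filter Topology

/-- Kernel whose derivative is the Riemann–Liouville fractional derivative: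
`(1/Γ(1-θ)) ∫₀^τ (τ-s)^(-θ) v(s) ds`. -/
noncomputable def RLkernel (θ : ℝ) (v : ℝ → ℝ) (τ : ℝ) : ℝ :=
  (Real.Gamma (1 - θ))⁻¹ * ∫ s in (0:ℝ)..τ, (τ - s) ^ (-θ) * v s

/-- Riemann–Liouville fractional derivative `∂^θ v`. -/
noncomputable def RLderiv (θ : ℝ) (v : ℝ → ℝ) (t : ℝ) : ℝ := deriv (RLkernel θ v) t

lemma tangent_pow_nonneg (p : ℕ) (hp : 2 ≤ p) (a x : ℝ) (ha : 0 ≤ a) (hx : 0 ≤ x) :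
    a ^ p + p * a ^ (p - 1) * (x - a) ≤ x ^ p := by
  rcases eq_or_lt_of_le ha with h0 | h0
  · have hp1 : p - 1 ≠ 0 := by omega
    simp [← h0, zero_pow hp1, zero_pow (by omega : p ≠ 0)]
    positivity
  · have key := one_add_mul_le_pow (a := x / a - 1) (by nlinarith [div_nonneg hx h0.le]) p
    have h1 : (1 : ℝ) + (x / a - 1) = x / a := by ring
    rw [h1] at key
    have key2 : a ^ p * (1 + p * (x / a - 1)) ≤ a ^ p * (x / a) ^ p :=
      mul_le_mul_of_nonneg_left key (by positivity)
    have hap : a ^ p * (x / a) ^ p = x ^ p := by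
      rw [div_pow, mul_div_cancel₀]
      positivity
    have hpa : a ^ p = a ^ (p - 1) * a := by
      rw [← pow_succ]; congr 1; omega
    rw [hap] at key2
    calc a ^ p + p * a ^ (p - 1) * (x - a)
        = a ^ p * (1 + p * (x / a - 1)) := by
          rw [hpa]; field_simp
      _ ≤ x ^ p := key2

lemma tangent_pow (p : ℕ) (hp : 2 ≤ p) (a x : ℝ) (h : Even p ∨ (0 ≤ a ∧ 0 ≤ x)) :
    a ^ p + p * a ^ (p - 1) * (x - a) ≤ x ^ p := by
  rcases h with hev | ⟨ha, hx⟩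
  swap
  · exact tangent_pow_nonneg p hp a x ha hx
  have hodd : Odd (p - 1) := by
    rcases hev with ⟨k, hk⟩
    exact ⟨k - 1, by omega⟩
  have main : ∀ b y : ℝ, 0 ≤ b → b ^ p + p * b ^ (p - 1) * (y - b) ≤ y ^ p := by
    intro b y hb
    rcases le_or_gt 0 y with hy | hy
    · exact tangent_pow_nonneg p hp b y hb hy
    · have h1 : b ^ p + p * b ^ (p - 1) * (-y - b) ≤ (-y) ^ p :=
        tangent_pow_nonneg p hp b (-y) hb (by linarith)
      have h2 : (-y) ^ p = y ^ p := hev.neg_pow y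
      have h3 : p * b ^ (p - 1) * (y - b) ≤ p * b ^ (p - 1) * (-y - b) := by
        have : (0:ℝ) ≤ p * b ^ (p-1) := by positivity
        nlinarith
      linarith
  rcases le_or_gt 0 a with ha | ha
  · exact main a x ha
  · have h1 := main (-a) (-x) (by linarith)
    have h2 : (-a) ^ p = a ^ p := hev.neg_pow a
    have h3 : (-x) ^ p = x ^ p := hev.neg_pow x
    have h4 : (-a) ^ (p - 1) = -(a ^ (p-1)) := hodd.neg_pow a
    rw [h2, h3, h4] at h1
    calc a ^ p + p * a ^ (p - 1) * (x - a)
        = a ^ p + p * (-(a ^ (p-1))) * (-x - -a) := by ring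
      _ ≤ x ^ p := h1

open Finset in
lemma pow_diff_le (B a x : ℝ) (hB : 0 ≤ B) (ha : |a| ≤ B) (hx : |x| ≤ B) (i : ℕ) :
    |x ^ i - a ^ i| ≤ i * B ^ (i - 1) * |x - a| := by
  rcases Nat.eq_zero_or_pos i with h0 | h0
  · simp [h0]
  rw [← geom_sum₂_mul x a i, abs_mul]
  have hsum : |∑ j ∈ range i, x ^ j * a ^ (i - 1 - j)| ≤ i * B ^ (i - 1) := by
    calc |∑ j ∈ range i, x ^ j * a ^ (i - 1 - j)|
        ≤ ∑ j ∈ range i, |x ^ j * a ^ (i - 1 - j)| := abs_sum_le_sum_abs _ _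
      _ ≤ ∑ _j ∈ range i, B ^ (i - 1) := by
          apply Finset.sum_le_sum
          intro j hj
          rw [abs_mul, abs_pow, abs_pow]
          calc |x| ^ j * |a| ^ (i - 1 - j)
              ≤ B ^ j * B ^ (i - 1 - j) := by
                apply mul_le_mul (pow_le_pow_left₀ (abs_nonneg _) hx j)
                  (pow_le_pow_left₀ (abs_nonneg _) ha _) (by positivity) (by positivity)
            _ = B ^ (i - 1) := by
                rw [← pow_add]; congr 1
                have := Finset.mem_range.mp hj; omega
      _ = i * B ^ (i - 1) := by rw [Finset.sum_const, card_range, nsmul_eq_mul]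
  exact mul_le_mul_of_nonneg_right hsum (abs_nonneg _)

open Finset in
lemma pow_taylor_bound (p : ℕ) (hp : 2 ≤ p) (B a x : ℝ) (hB : 0 ≤ B)
    (ha : |a| ≤ B) (hx : |x| ≤ B) :
    |x ^ p - a ^ p - p * a ^ (p - 1) * (x - a)| ≤ p * p * B ^ (p - 2) * (x - a) ^ 2 := by
  have key : x ^ p - a ^ p - p * a ^ (p - 1) * (x - a)
      = (∑ i ∈ range p, (x ^ i * a ^ (p - 1 - i) - a ^ (p - 1))) * (x - a) := by
    rw [Finset.sum_sub_distrib, sub_mul, geom_sum₂_mul, Finset.sum_const, card_range,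
      nsmul_eq_mul]
  rw [key, abs_mul]
  have hsum : |∑ i ∈ range p, (x ^ i * a ^ (p - 1 - i) - a ^ (p - 1))|
      ≤ p * p * B ^ (p - 2) * |x - a| := by
    calc |∑ i ∈ range p, (x ^ i * a ^ (p - 1 - i) - a ^ (p - 1))|
        ≤ ∑ i ∈ range p, |x ^ i * a ^ (p - 1 - i) - a ^ (p - 1)| := abs_sum_le_sum_abs _ _
      _ ≤ ∑ _i ∈ range p, p * B ^ (p - 2) * |x - a| := by
          apply Finset.sum_le_sum
          intro i hi
          have hip := Finset.mem_range.mp hi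
          have heq : x ^ i * a ^ (p - 1 - i) - a ^ (p - 1)
              = (x ^ i - a ^ i) * a ^ (p - 1 - i) := by
            rw [sub_mul, ← pow_add]; congr 3; omega
          rw [heq, abs_mul, abs_pow]
          calc |x ^ i - a ^ i| * |a| ^ (p - 1 - i)
              ≤ (i * B ^ (i - 1) * |x - a|) * B ^ (p - 1 - i) := by
                apply mul_le_mul (pow_diff_le B a x hB ha hx i)
                  (pow_le_pow_left₀ (abs_nonneg _) ha _) (by positivity) (by positivity)
            _ ≤ p * B ^ (p - 2) * |x - a| := by
                rcases Nat.eq_zero_or_pos i with h0 | h0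
                · simp [h0]; positivity
                have : B ^ (i - 1) * B ^ (p - 1 - i) = B ^ (p - 2) := by
                  rw [← pow_add]; congr 1; omega
                calc (i * B ^ (i - 1) * |x - a|) * B ^ (p - 1 - i)
                    = i * (B ^ (i-1) * B ^ (p-1-i)) * |x - a| := by ring
                  _ = i * B ^ (p - 2) * |x - a| := by rw [this]
                  _ ≤ p * B ^ (p - 2) * |x - a| := by
                      apply mul_le_mul_of_nonneg_right _ (abs_nonneg _)
                      apply mul_le_mul_of_nonneg_right _ (by positivity)
                      exact_mod_cast Nat.cast_le.mpr hip.le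
      _ = p * p * B ^ (p - 2) * |x - a| := by
          rw [Finset.sum_const, card_range, nsmul_eq_mul]; ring
  calc |∑ i ∈ range p, (x ^ i * a ^ (p - 1 - i) - a ^ (p - 1))| * |x - a|
      ≤ (p * p * B ^ (p - 2) * |x - a|) * |x - a| :=
        mul_le_mul_of_nonneg_right hsum (abs_nonneg _)
    _ = p * p * B ^ (p - 2) * (|x - a| * |x - a|) := by ring
    _ = p * p * B ^ (p - 2) * (x - a) ^ 2 := by rw [abs_mul_abs_self, sq]

lemma kernel_integrable {θ : ℝ} (hθ1 : θ < 1) (τ a b : ℝ) :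
    IntervalIntegrable (fun s => (τ - s) ^ (-θ)) volume a b := by
  have h := (intervalIntegrable_rpow' (a := τ - a) (b := τ - b)
    (r := -θ) (by linarith)).comp_sub_left τ
  simpa using h

lemma kernel_mul_integrable {θ T : ℝ} (hθ1 : θ < 1)
    {w : ℝ → ℝ} (hw : ContinuousOn w (Icc 0 T))
    {τ a b : ℝ} (ha : 0 ≤ a) (hab : a ≤ b) (hbT : b ≤ T) :
    IntervalIntegrable (fun s => (τ - s) ^ (-θ) * w s) volume a b := by
  apply (kernel_integrable hθ1 τ a b).mul_continuousOn
  apply hw.mono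
  rw [uIcc_of_le hab]
  exact Icc_subset_Icc ha hbT

lemma kernel_integral {θ : ℝ} (hθ0 : 0 < θ) (hθ1 : θ < 1) {τ a : ℝ} :
    ∫ s in a..τ, (τ - s) ^ (-θ) = (τ - a) ^ (1 - θ) / (1 - θ) := by
  have h1 : (∫ s in a..τ, (τ - s) ^ (-θ)) = ∫ x in (τ - τ)..(τ - a), x ^ (-θ) :=
    integral_comp_sub_left (fun x => x ^ (-θ)) τ
  rw [h1, sub_self]
  rw [integral_rpow (Or.inl (by linarith)),
    Real.zero_rpow (by intro h; linarith : -θ + 1 ≠ 0),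
    show -θ + 1 = 1 - θ by ring, sub_zero]

lemma holder_continuousOn {T θ₁ Cv : ℝ} (hθ₁ : 0 < θ₁) (hCv : 0 ≤ Cv) {v : ℝ → ℝ}
    (hHolder : ∀ s ∈ Icc (0:ℝ) T, ∀ r ∈ Icc (0:ℝ) T, |v s - v r| ≤ Cv * |s - r| ^ θ₁) :
    ContinuousOn v (Icc 0 T) := by
  have h : HolderOnWith ⟨Cv, hCv⟩ ⟨θ₁, hθ₁.le⟩ v (Icc 0 T) := by
    intro x hx y hy
    rw [edist_dist, edist_dist, Real.dist_eq, Real.dist_eq]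
    calc ENNReal.ofReal |v x - v y| ≤ ENNReal.ofReal (Cv * |x - y| ^ θ₁) :=
          ENNReal.ofReal_le_ofReal (hHolder x hx y hy)
      _ = _ := by
          rw [ENNReal.ofReal_mul hCv, ← ENNReal.ofReal_rpow_of_nonneg (abs_nonneg _) hθ₁.le,
            ENNReal.ofReal_eq_coe_nnreal hCv]
          norm_cast
  exact h.continuousOn (by exact_mod_cast hθ₁)

theorem stmt7 (θ θ₁ T : ℝ) (hθ : θ ∈ Ioo (0:ℝ) 1) (hθ₁ : θ / 2 < θ₁) (hθ₁' : θ₁ ≤ 1)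
    (hT : 0 < T) (v : ℝ → ℝ) (Cv : ℝ) (hCv : 0 ≤ Cv)
    (hHolder : ∀ s ∈ Icc (0:ℝ) T, ∀ r ∈ Icc (0:ℝ) T, |v s - v r| ≤ Cv * |s - r| ^ θ₁)
    (p : ℕ) (hp : 2 ≤ p)
    (hpar : Even p ∨ ∀ s ∈ Icc (0:ℝ) T, 0 ≤ v s)
    (t : ℝ) (ht : t ∈ Ioc (0:ℝ) T)
    (hex₁ : DifferentiableAt ℝ (RLkernel θ v) t)
    (hex₂ : DifferentiableAt ℝ (RLkernel θ (fun s => v s ^ p)) t) :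
    RLderiv θ (fun s => v s ^ p) t ≤
        RLderiv θ (fun s => v s ^ p) t
          + ((p : ℝ) - 1) * v t ^ p * (t ^ (-θ) / Real.Gamma (1 - θ))
      ∧ RLderiv θ (fun s => v s ^ p) t
          + ((p : ℝ) - 1) * v t ^ p * (t ^ (-θ) / Real.Gamma (1 - θ))
        ≤ (p : ℝ) * v t ^ (p - 1) * RLderiv θ v t := by
  obtain ⟨hθ0, hθ1⟩ := hθ
  obtain ⟨ht0, htT⟩ := ht
  have hθ₁0 : 0 < θ₁ := lt_trans (by linarith) hθ₁
  have hΓ : 0 < Real.Gamma (1 - θ) := Real.Gamma_pos_of_pos (by linarith)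
  have hΓinn : (0:ℝ) ≤ (Real.Gamma (1 - θ))⁻¹ := inv_nonneg.mpr hΓ.le
  have hp' : (2:ℝ) ≤ (p:ℝ) := by exact_mod_cast hp
  have hvt_nonneg : 0 ≤ v t ^ p := by
    rcases hpar with hev | hnn
    · exact hev.pow_nonneg _
    · exact pow_nonneg (hnn t ⟨ht0.le, htT⟩) p
  have hω : 0 ≤ t ^ (-θ) / Real.Gamma (1 - θ) :=
    div_nonneg (Real.rpow_nonneg ht0.le _) hΓ.le
  refine ⟨le_add_of_nonneg_right
    (mul_nonneg (mul_nonneg (by linarith) hvt_nonneg) hω), ?_⟩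
  have hvcont : ContinuousOn v (Icc 0 T) := holder_continuousOn hθ₁0 hCv hHolder
  have hvpcont : ContinuousOn (fun s => v s ^ p) (Icc 0 T) := hvcont.pow p
  set a : ℝ := v t with ha
  set c1 : ℝ := (p:ℝ) * a ^ (p-1) with hc1
  set c2 : ℝ := ((p:ℝ) - 1) * a ^ p with hc2
  set φ : ℝ → ℝ := fun s => c1 * v s - v s ^ p - c2 with hφ
  have hφcont : ContinuousOn φ (Icc 0 T) :=
    ((continuousOn_const.mul hvcont).sub hvpcont).sub continuousOn_const
  set B : ℝ := Cv * T ^ θ₁ + |v 0| with hB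
  have hBnn : 0 ≤ B := add_nonneg (mul_nonneg hCv (Real.rpow_nonneg hT.le _)) (abs_nonneg _)
  have hvB : ∀ s ∈ Icc (0:ℝ) T, |v s| ≤ B := by
    intro s hs
    have h1 := hHolder s hs 0 ⟨le_rfl, hT.le⟩
    have h2 : |s - 0| ^ θ₁ ≤ T ^ θ₁ := by
      rw [sub_zero, abs_of_nonneg hs.1]
      exact Real.rpow_le_rpow hs.1 hs.2 hθ₁0.le
    have h3 : |v s| ≤ |v s - v 0| + |v 0| := by
      calc |v s| = |(v s - v 0) + v 0| := by ring_nf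
        _ ≤ |v s - v 0| + |v 0| := abs_add_le _ _
    have h4 : Cv * |s - 0| ^ θ₁ ≤ Cv * T ^ θ₁ := mul_le_mul_of_nonneg_left h2 hCv
    rw [hB]; linarith
  set L : ℝ := p * p * B ^ (p - 2) with hL
  have hLnn : 0 ≤ L := by positivity
  have hφ_nonpos : ∀ s ∈ Icc (0:ℝ) T, φ s ≤ 0 := by
    intro s hs
    have htan : a ^ p + p * a ^ (p-1) * (v s - a) ≤ v s ^ p := by
      apply tangent_pow p hp
      rcases hpar with hev | hnn
      · exact Or.inl hev
      · exact Or.inr ⟨hnn t ⟨ht0.le, htT⟩, hnn s hs⟩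
    have hpa : a ^ (p-1) * a = a ^ p := by rw [← pow_succ]; congr 1; omega
    have heq : φ s = (a ^ p + p * a ^ (p-1) * (v s - a)) - v s ^ p := by
      simp only [hφ, hc1, hc2]; linear_combination (p:ℝ) * hpa
    rw [heq]; linarith
  have hφ_bound : ∀ s ∈ Icc (0:ℝ) T, |φ s| ≤ L * Cv^2 * |t - s| ^ (2*θ₁) := by
    intro s hs
    have hpa : a ^ (p-1) * a = a ^ p := by rw [← pow_succ]; congr 1; omega
    have h1 : φ s = -(v s ^ p - a ^ p - p * a ^ (p-1) * (v s - a)) := by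
      simp only [hφ, hc1, hc2]; linear_combination (p:ℝ) * hpa
    rw [h1, abs_neg]
    have h2 := pow_taylor_bound p hp B a (v s) hBnn (hvB t ⟨ht0.le, htT⟩) (hvB s hs)
    have h3 : |v s - a| ≤ Cv * |s - t| ^ θ₁ := hHolder s hs t ⟨ht0.le, htT⟩
    have h4 : (v s - a)^2 ≤ (Cv * |s - t| ^ θ₁)^2 := by
      rw [← sq_abs (v s - a)]
      exact pow_le_pow_left₀ (abs_nonneg _) h3 2
    have h5 : (Cv * |s - t| ^ θ₁)^2 = Cv^2 * |t - s| ^ (2*θ₁) := by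
      rw [mul_pow, ← Real.rpow_natCast (|s - t| ^ θ₁) 2, ← Real.rpow_mul (abs_nonneg _),
        abs_sub_comm]
      norm_num [mul_comm]
    calc |v s ^ p - a ^ p - ↑p * a ^ (p - 1) * (v s - a)|
        ≤ L * (v s - a)^2 := h2
      _ ≤ L * (Cv^2 * |t - s| ^ (2*θ₁)) := by
          apply mul_le_mul_of_nonneg_left _ hLnn
          rw [← h5]; exact h4
      _ = L * Cv^2 * |t - s| ^ (2*θ₁) := by ring
  set A : ℝ → ℝ := fun τ => ∫ s in (0:ℝ)..τ, (τ - s) ^ (-θ) * φ s with hA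
  have hrepr : ∀ τ, 0 ≤ τ → τ ≤ T →
      c1 * RLkernel θ v τ - RLkernel θ (fun s => v s ^ p) τ
        - (c2 * (Real.Gamma (1 - θ))⁻¹ / (1 - θ)) * τ ^ (1-θ)
      = (Real.Gamma (1 - θ))⁻¹ * A τ := by
    intro τ h0 hTτ
    have i1 : IntervalIntegrable (fun s => (τ - s)^(-θ) * v s) volume 0 τ :=
      kernel_mul_integrable hθ1 hvcont le_rfl h0 hTτ
    have i2 : IntervalIntegrable (fun s => (τ - s)^(-θ) * v s ^ p) volume 0 τ :=
      kernel_mul_integrable hθ1 hvpcont le_rfl h0 hTτ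
    have i3 : IntervalIntegrable (fun s => (τ - s)^(-θ)) volume 0 τ :=
      kernel_integrable hθ1 τ 0 τ
    have e1 : A τ = c1 * (∫ s in (0:ℝ)..τ, (τ - s)^(-θ) * v s)
        - (∫ s in (0:ℝ)..τ, (τ - s)^(-θ) * v s ^ p)
        - c2 * (∫ s in (0:ℝ)..τ, (τ - s)^(-θ)) := by
      rw [← intervalIntegral.integral_const_mul, ← intervalIntegral.integral_const_mul,
        ← intervalIntegral.integral_sub (i1.const_mul c1) i2,
        ← intervalIntegral.integral_sub ((i1.const_mul c1).sub i2) (i3.const_mul c2)]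
      apply intervalIntegral.integral_congr
      intro s _
      simp only [hφ]; ring
    have e2 : (∫ s in (0:ℝ)..τ, (τ - s)^(-θ)) = τ^(1-θ)/(1-θ) := by
      rw [kernel_integral hθ0 hθ1, sub_zero]
    rw [e1, e2]
    simp only [RLkernel]
    ring
  have hDpos : 0 ≤ c1 * RLderiv θ v t - RLderiv θ (fun s => v s ^ p) t
      - c2 * (t ^ (-θ) / Real.Gamma (1 - θ)) := by
    set G : ℝ → ℝ := fun τ => c1 * RLkernel θ v τ - RLkernel θ (fun s => v s ^ p) τ
        - (c2 * (Real.Gamma (1 - θ))⁻¹ / (1 - θ)) * τ ^ (1-θ) with hGdef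
    have hG : HasDerivAt G (c1 * RLderiv θ v t - RLderiv θ (fun s => v s ^ p) t
        - c2 * (t ^ (-θ) / Real.Gamma (1 - θ))) t := by
      have h1 : HasDerivAt (RLkernel θ v) (RLderiv θ v t) t := hex₁.hasDerivAt
      have h2 : HasDerivAt (RLkernel θ (fun s => v s ^ p))
          (RLderiv θ (fun s => v s ^ p) t) t := hex₂.hasDerivAt
      have h3 : HasDerivAt (fun τ : ℝ => τ ^ (1-θ)) ((1-θ) * t ^ (-θ)) t := by
        have h := Real.hasDerivAt_rpow_const (x := t) (p := 1-θ) (Or.inl (ne_of_gt ht0))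
        rwa [show (1-θ) - 1 = -θ by ring] at h
      have h4 := ((h1.const_mul c1).sub h2).sub
        (h3.const_mul (c2 * (Real.Gamma (1 - θ))⁻¹ / (1 - θ)))
      convert h4 using 1
      have h1θ : (1:ℝ) - θ ≠ 0 := by intro h; linarith
      have hΓne : Real.Gamma (1 - θ) ≠ 0 := ne_of_gt hΓ
      have hc : (1 - θ) * (1 - θ)⁻¹ = 1 := mul_inv_cancel₀ h1θ
      · rfl
      · rfl
      · rfl
      · linear_combination (c2 * (Real.Gamma (1 - θ))⁻¹ * t ^ (-θ)) * (mul_inv_cancel₀ (show (1:ℝ) - θ ≠ 0 by intro h; linarith))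
    have tends1 : Tendsto (slope G t) (𝓝[<] t)
        (𝓝 (c1 * RLderiv θ v t - RLderiv θ (fun s => v s ^ p) t
          - c2 * (t ^ (-θ) / Real.Gamma (1 - θ)))) :=
      (hasDerivAt_iff_tendsto_slope.mp hG).mono_left
        (nhdsWithin_mono t (fun u hu => ne_of_lt hu))
    set δ : ℝ := 2*θ₁ - θ with hδ
    have hδ0 : 0 < δ := by rw [hδ]; linarith
    set Kc : ℝ := (Real.Gamma (1 - θ))⁻¹ * (L * Cv^2) / (1 - θ) with hKc
    have hKc0 : 0 ≤ Kc :=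
      div_nonneg (mul_nonneg hΓinn (mul_nonneg hLnn (sq_nonneg _))) (by linarith)
    have key : ∀ u ∈ Ioo (0:ℝ) t, -(Kc * (t-u)^δ) ≤ slope G t u := by
      intro u hu
      obtain ⟨hu0, hut⟩ := hu
      have htu0 : (0:ℝ) < t - u := by linarith
      have huT : u ≤ T := le_trans hut.le htT
      have j1 : IntervalIntegrable (fun s => (t - s)^(-θ) * φ s) volume 0 u :=
        kernel_mul_integrable hθ1 hφcont le_rfl hu0.le huT
      have j2 : IntervalIntegrable (fun s => (t - s)^(-θ) * φ s) volume u t :=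
        kernel_mul_integrable hθ1 hφcont hu0.le hut.le htT
      have j3 : IntervalIntegrable (fun s => (u - s)^(-θ) * φ s) volume 0 u :=
        kernel_mul_integrable hθ1 hφcont le_rfl hu0.le huT
      have hsplit := intervalIntegral.integral_add_adjacent_intervals j1 j2
      have e : A t - A u = (∫ s in (0:ℝ)..u, ((t-s)^(-θ) - (u-s)^(-θ)) * φ s)
          + ∫ s in u..t, (t-s)^(-θ) * φ s := by
        have e3 : (∫ s in (0:ℝ)..u, ((t-s)^(-θ) - (u-s)^(-θ)) * φ s)
            = (∫ s in (0:ℝ)..u, (t-s)^(-θ) * φ s)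
              - ∫ s in (0:ℝ)..u, (u-s)^(-θ) * φ s := by
          rw [← intervalIntegral.integral_sub j1 j3]
          apply intervalIntegral.integral_congr
          intro s _; ring
        simp only [hA]
        rw [← hsplit, e3]; ring
      have ht1 : 0 ≤ ∫ s in (0:ℝ)..u, ((t-s)^(-θ) - (u-s)^(-θ)) * φ s := by
        apply intervalIntegral.integral_nonneg_of_ae_restrict hu0.le
        have hne : ∀ᵐ s : ℝ ∂(volume.restrict (Icc 0 u)), s ≠ u := by
          apply Filter.Eventually.filter_mono (ae_mono Measure.restrict_le_self)
          have : volume {u} = 0 := measure_singleton u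
          rw [MeasureTheory.ae_iff]
          simpa using this
        filter_upwards [ae_restrict_mem measurableSet_Icc, hne] with s hs hsne
        have hsu : s < u := lt_of_le_of_ne hs.2 hsne
        have hk : (t - s)^(-θ) ≤ (u - s)^(-θ) :=
          Real.rpow_le_rpow_of_nonpos (by linarith) (by linarith) (by linarith)
        have hφs : φ s ≤ 0 := hφ_nonpos s ⟨hs.1, by linarith⟩
        have := mul_nonneg (neg_nonneg.mpr (by linarith : (t-s)^(-θ) - (u-s)^(-θ) ≤ 0))
          (neg_nonneg.mpr hφs)
        rwa [neg_mul_neg] at this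
      set c : ℝ := L * Cv^2 * (t-u)^(2*θ₁) with hc
      have hcnn : 0 ≤ c :=
        mul_nonneg (mul_nonneg hLnn (sq_nonneg _)) (Real.rpow_nonneg htu0.le _)
      have ht2 : -(c * ((t-u)^(1-θ)/(1-θ))) ≤ ∫ s in u..t, (t-s)^(-θ) * φ s := by
        have jf : IntervalIntegrable (fun s => -c * (t-s)^(-θ)) volume u t :=
          (kernel_integrable hθ1 t u t).const_mul (-c)
        have hmono := intervalIntegral.integral_mono_on hut.le jf j2 (fun s hs => by
          have hs1 : u ≤ s := hs.1
          have hs2 : s ≤ t := hs.2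
          have hker : 0 ≤ (t - s)^(-θ) := Real.rpow_nonneg (by linarith) _
          have hb1 : |φ s| ≤ c := by
            have hb := hφ_bound s ⟨by linarith, by linarith⟩
            have h5 : |t - s| ^ (2*θ₁) ≤ (t-u)^(2*θ₁) := by
              rw [abs_of_nonneg (by linarith : (0:ℝ) ≤ t - s)]
              exact Real.rpow_le_rpow (by linarith) (by linarith) (by linarith)
            calc |φ s| ≤ L * Cv^2 * |t - s| ^ (2*θ₁) := hb
              _ ≤ c := by
                  rw [hc]
                  exact mul_le_mul_of_nonneg_left h5 (mul_nonneg hLnn (sq_nonneg _))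
          have hneg : -c ≤ φ s := neg_le_of_abs_le hb1
          calc -c * (t-s)^(-θ) ≤ φ s * (t-s)^(-θ) :=
                mul_le_mul_of_nonneg_right hneg hker
            _ = (t-s)^(-θ) * φ s := mul_comm _ _)
        have hval : (∫ s in u..t, -c * (t-s)^(-θ)) = -(c * ((t-u)^(1-θ)/(1-θ))) := by
          rw [intervalIntegral.integral_const_mul, kernel_integral hθ0 hθ1]
          ring
        rw [hval] at hmono
        exact hmono
      have hAtu : -(c * ((t-u)^(1-θ)/(1-θ))) ≤ A t - A u := by
        rw [e]; linarith
      have hGt : G t = (Real.Gamma (1 - θ))⁻¹ * A t := hrepr t ht0.le htT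
      have hGu : G u = (Real.Gamma (1 - θ))⁻¹ * A u := hrepr u hu0.le huT
      have hslope : slope G t u = (Real.Gamma (1 - θ))⁻¹ * (A t - A u) / (t - u) := by
        rw [slope_def_field, hGt, hGu]
        rw [div_eq_div_iff (by linarith : u - t ≠ 0) (ne_of_gt htu0)]
        ring
      have h6 : (Real.Gamma (1 - θ))⁻¹ * (-(c * ((t-u)^(1-θ)/(1-θ))))
          ≤ (Real.Gamma (1 - θ))⁻¹ * (A t - A u) :=
        mul_le_mul_of_nonneg_left hAtu hΓinn
      have h7 : -(Kc * (t-u)^δ) * (t - u)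
          = (Real.Gamma (1 - θ))⁻¹ * (-(c * ((t-u)^(1-θ)/(1-θ)))) := by
        have e1 : (t-u)^(2*θ₁) * (t-u)^(1-θ) = (t-u)^(2*θ₁ + (1-θ)) :=
          (Real.rpow_add htu0 _ _).symm
        have e2 : (t-u)^(2*θ₁ + (1-θ)) = (t-u)^δ * (t-u) := by
          rw [show 2*θ₁ + (1-θ) = δ + 1 by rw [hδ]; ring, Real.rpow_add htu0,
            Real.rpow_one]
        have hcomb : (t-u)^(2*θ₁) * (t-u)^(1-θ) = (t-u)^δ * (t-u) := by rw [e1, e2]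
        rw [hKc, hc]
        linear_combination ((Real.Gamma (1 - θ))⁻¹ * (L * Cv^2) / (1 - θ)) * hcomb
      rw [hslope, le_div_iff₀ htu0, h7]
      exact h6
    have tends2 : Tendsto (fun u => -(Kc * (t-u)^δ)) (𝓝[<] t) (𝓝 0) := by
      have l1 : Tendsto (fun u : ℝ => t - u) (𝓝[<] t) (𝓝 0) := by
        have h : Tendsto (fun u : ℝ => t - u) (𝓝 t) (𝓝 (t - t)) :=
          tendsto_const_nhds.sub tendsto_id
        rw [sub_self] at h
        exact h.mono_left nhdsWithin_le_nhds
      have l2 : Tendsto (fun x : ℝ => x ^ δ) (𝓝 0) (𝓝 0) := by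
        have hc := Real.continuousAt_rpow_const 0 δ (Or.inr hδ0.le)
        have h := hc.tendsto
        rwa [Real.zero_rpow (ne_of_gt hδ0)] at h
      have h := ((l2.comp l1).const_mul Kc).neg
      simpa using h
    exact le_of_tendsto_of_tendsto tends2 tends1
      (Filter.eventually_of_mem (Ioo_mem_nhdsLT_of_mem ⟨ht0, le_rfl⟩) key)
  have hfinal : RLderiv θ (fun s => v s ^ p) t
      + (((p:ℝ) - 1) * a ^ p) * (t ^ (-θ) / Real.Gamma (1 - θ))
      ≤ ((p:ℝ) * a ^ (p-1)) * RLderiv θ v t := by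
    rw [← hc1, ← hc2]
    linarith
  exact hfinal
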